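/- Fix a real α > 1 and let F be a function in the class P of Pick Argument Lessening functions satisfying F(z)^{α+1} = F(z) + z − 1 on H (principal power). Then for every z ∈ H the number ψ(z) := F(z)^α lies in the upper half-plane H, and Arg(ψ(z) − 1) ≤ Arg(z − 1). -/

import Mathlib

/- The upper half-plane H = {z : ℂ | Im z > 0}. -/
def UHP : Set ℂ := {z : ℂ | 0 < z.im}

/- The half-axis [1, ∞) viewed inside ℂ. -/
def posRay : Set ℂ := {z : ℂ | z.im = 0 ∧ 1 ≤ z.re}

/-- The class P of Pick Argument Lessening functions. -/
structure IsPal (φ : ℂ → ℂ) : Prop where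
  holo : DifferentiableOn ℂ φ UHP
  mapsUHP : ∀ z ∈ UHP, 0 < (φ z).im
  cont : ContinuousOn φ (UHP ∪ posRay)
  realOnRay : ∀ z ∈ posRay, (φ z).im = 0
  fix_one : φ 1 = 1

open Complex Real Set Filter Topology

/-- Imaginary part of a real power of a nonzero complex number. -/
lemma im_cpow_real (w : ℂ) (c : ℝ) (hw : w ≠ 0) :
    (w ^ (c : ℂ)).im = Real.exp (c * Real.log ‖w‖) * Real.sin (c * Complex.arg w) := by
  rw [Complex.cpow_def_of_ne_zero hw, Complex.exp_im]
  simp [Complex.mul_re, Complex.mul_im, Complex.log_re, Complex.log_im]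
  ring_nf

/-- if F ∈ P satisfies F(z)^{α+1} = F(z) + z − 1 on H, then
ψ(z) = F(z)^α lies in H for z ∈ H, and Arg(ψ(z) − 1) ≤ Arg(z − 1). -/
theorem psi_in_upper_half_plane (α : ℝ) (hα : 1 < α) (F : ℂ → ℂ) (hF : IsPal F)
    (heq : ∀ z ∈ UHP, F z ^ (((α + 1 : ℝ)) : ℂ) = F z + z - 1) :
    ∀ z ∈ UHP,
      0 < (F z ^ ((α : ℝ) : ℂ)).im ∧
      Complex.arg (F z ^ ((α : ℝ) : ℂ) - 1) ≤ Complex.arg (z - 1) := by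
  have hα1 : (0:ℝ) < α + 1 := by linarith
  set c : ℝ := π / (α + 1) with hc
  have hc0 : 0 < c := div_pos Real.pi_pos hα1
  -- basic pointwise facts
  have hFne : ∀ z ∈ UHP, F z ≠ 0 := by
    intro z hz h
    have := hF.mapsUHP z hz
    rw [h] at this; simp at this
  have hargpos : ∀ z ∈ UHP, 0 < Complex.arg (F z) := by
    intro z hz
    have h1 : 0 ≤ Complex.arg (F z) :=
      Complex.arg_nonneg_iff.mpr (le_of_lt (hF.mapsUHP z hz))
    rcases h1.lt_or_eq with h | h
    · exact h
    · exfalso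
      have := (Complex.arg_eq_zero_iff.mp h.symm).2
      have := hF.mapsUHP z hz
      linarith
  have harglt : ∀ z ∈ UHP, Complex.arg (F z) < π := by
    intro z hz
    rcases lt_or_eq_of_le (Complex.arg_le_pi (F z)) with h | h
    · exact h
    · exfalso
      have := (Complex.arg_eq_pi_iff.mp h).2
      have := hF.mapsUHP z hz
      linarith
  -- sin ((α+1) * arg (F z)) > 0 on UHP
  have hsin : ∀ z ∈ UHP, 0 < Real.sin ((α + 1) * Complex.arg (F z)) := by
    intro z hz
    have h1 : (F z ^ (((α + 1 : ℝ)) : ℂ)).im = (F z).im + z.im := by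
      rw [heq z hz]; simp
    have h2 := im_cpow_real (F z) (α + 1) (hFne z hz)
    have h3 : 0 < (F z).im + z.im := add_pos (hF.mapsUHP z hz) hz
    rw [h2] at h1
    nlinarith [Real.exp_pos ((α + 1) * Real.log ‖F z‖),
      Real.exp_pos ((α + 1) * Real.log ‖F z‖)]
  -- arg (F z) never equals c
  have hnec : ∀ z ∈ UHP, Complex.arg (F z) ≠ c := by
    intro z hz h
    have := hsin z hz
    rw [h, hc, mul_div_cancel₀ _ (ne_of_gt hα1)] at this
    simp at this
  -- continuity of arg ∘ F on UHP
  have hθcont : ContinuousOn (fun z => Complex.arg (F z)) UHP := by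
    intro z hz
    have hc1 : ContinuousWithinAt F UHP z :=
      (hF.holo z hz).continuousWithinAt
    have hc2 : ContinuousAt Complex.arg (F z) :=
      Complex.continuousAt_arg (Or.inr (ne_of_gt (hF.mapsUHP z hz)))
    exact hc2.comp_continuousWithinAt hc1
  -- a point where arg (F z) < c, near z = 1
  have hexists : ∃ z ∈ UHP, Complex.arg (F z) < c := by
    have hmem : (1 : ℂ) ∈ UHP ∪ posRay := Or.inr ⟨by simp, by simp⟩
    have hcw : ContinuousWithinAt F (UHP ∪ posRay) 1 := hF.cont 1 hmem
    have htend : Tendsto (fun t : ℝ => (1 : ℂ) + t * Complex.I) (𝓝[>] 0)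
        (𝓝[UHP ∪ posRay] 1) := by
      apply tendsto_nhdsWithin_of_tendsto_nhds_of_eventually_within
      · have hcont : Continuous (fun t : ℝ => (1 : ℂ) + (t : ℂ) * Complex.I) :=
          continuous_const.add (Complex.continuous_ofReal.mul continuous_const)
        have h0 : Tendsto (fun t : ℝ => (1 : ℂ) + (t : ℂ) * Complex.I) (𝓝 0)
            (𝓝 ((1 : ℂ) + ((0:ℝ) : ℂ) * Complex.I)) := hcont.tendsto 0
        simp only [Complex.ofReal_zero, zero_mul, add_zero] at h0
        exact h0.mono_left nhdsWithin_le_nhds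
      · filter_upwards [self_mem_nhdsWithin] with t ht
        left
        simp only [UHP, Set.mem_setOf_eq, Complex.add_im, Complex.one_im,
          Complex.mul_im, Complex.ofReal_re, Complex.I_im, Complex.ofReal_im, Complex.I_re]
        simpa using ht
    have h1 : Tendsto (fun t : ℝ => F ((1 : ℂ) + t * Complex.I)) (𝓝[>] 0) (𝓝 1) := by
      have := hcw.tendsto.comp htend
      rwa [hF.fix_one] at this
    have h2 : Tendsto (fun t : ℝ => Complex.arg (F ((1 : ℂ) + t * Complex.I)))
        (𝓝[>] 0) (𝓝 0) := by
      have hca : ContinuousAt Complex.arg 1 :=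
        Complex.continuousAt_arg (Or.inl (by norm_num))
      have := hca.tendsto.comp h1
      simpa [Function.comp_def] using this
    have h3 : ∀ᶠ t : ℝ in 𝓝[>] 0, Complex.arg (F ((1 : ℂ) + t * Complex.I)) < c :=
      h2.eventually (Filter.Tendsto.eventually_lt_const hc0 tendsto_id) |>.mono (fun t ht => ht)
    have h4 : ∀ᶠ t : ℝ in 𝓝[>] 0,
        Complex.arg (F ((1 : ℂ) + t * Complex.I)) < c ∧ (0:ℝ) < t :=
      h3.and self_mem_nhdsWithin
    obtain ⟨t, ht, ht0⟩ := h4.exists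
    refine ⟨(1 : ℂ) + t * Complex.I, ?_, ht⟩
    simp only [UHP, Set.mem_setOf_eq, Complex.add_im, Complex.one_im,
      Complex.mul_im, Complex.ofReal_re, Complex.I_im, Complex.ofReal_im, Complex.I_re]
    simpa using ht0
  obtain ⟨z₀, hz₀, hz₀c⟩ := hexists
  -- connectedness: arg (F z) < c everywhere on UHP
  have hpreconn : IsPreconnected UHP := (convex_halfSpace_im_gt 0).isPreconnected
  have hall : ∀ z ∈ UHP, Complex.arg (F z) < c := by
    intro z hz
    by_contra h
    push_neg at h
    have hcc : c ∈ Set.Icc (Complex.arg (F z₀)) (Complex.arg (F z)) :=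
      ⟨le_of_lt hz₀c, h⟩
    obtain ⟨w, hw, hwc⟩ := hpreconn.intermediate_value hz₀ hz hθcont hcc
    exact hnec w hw hwc
  -- now prove the theorem
  intro z hz
  have hFz := hF.mapsUHP z hz
  have hFzne := hFne z hz
  have hzim : 0 < z.im := hz
  set θ := Complex.arg (F z) with hθ
  have hθ0 : 0 < θ := hargpos z hz
  have hθc : θ < c := hall z hz
  -- sin (α θ) > 0
  have hsinα : 0 < Real.sin (α * θ) := by
    apply Real.sin_pos_of_pos_of_lt_pi
    · positivity
    · have h1 : α * θ < α * c := by
        apply mul_lt_mul_of_pos_left hθc (by linarith)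
      have h2 : α * c < π := by
        rw [hc, mul_comm, div_mul_eq_mul_div, div_lt_iff₀ hα1]
        nlinarith [Real.pi_pos]
      linarith
  -- Part 1 : Im (F z ^ α) > 0
  have him : 0 < (F z ^ ((α : ℝ) : ℂ)).im := by
    rw [im_cpow_real (F z) α hFzne]
    exact mul_pos (Real.exp_pos _) hsinα
  refine ⟨him, ?_⟩
  -- Part 2 : the arg inequality
  -- key algebraic identity: F z ^ α - 1 = (z - 1) * (F z)⁻¹
  have hsplit : F z ^ ((α : ℝ) : ℂ) * F z = F z + z - 1 := by
    have h1 := heq z hz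
    have h2 : (((α + 1 : ℝ)) : ℂ) = ((α : ℝ) : ℂ) + 1 := by push_cast; ring
    rw [h2, Complex.cpow_add _ _ hFzne, Complex.cpow_one] at h1
    exact h1
  have hkey : F z ^ ((α : ℝ) : ℂ) - 1 = (z - 1) * (F z)⁻¹ := by
    field_simp
    linear_combination hsplit
  have hz1ne : z - 1 ≠ 0 := by
    intro h
    have : (z - 1).im = 0 := by rw [h]; simp
    simp at this
    linarith
  have hz1arg0 : 0 < Complex.arg (z - 1) := by
    have h1 : 0 ≤ Complex.arg (z - 1) := by
      apply Complex.arg_nonneg_iff.mpr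
      simp only [Complex.sub_im, Complex.one_im, sub_zero]
      linarith
    rcases h1.lt_or_eq with h | h
    · exact h
    · exfalso
      have h2 := (Complex.arg_eq_zero_iff.mp h.symm).2
      simp only [Complex.sub_im, Complex.one_im, sub_zero] at h2
      linarith
  have hz1argπ : Complex.arg (z - 1) < π := by
    rcases lt_or_eq_of_le (Complex.arg_le_pi (z - 1)) with h | h
    · exact h
    · exfalso
      have := (Complex.arg_eq_pi_iff.mp h).2
      simp at this
      linarith
  have hargne : θ ≠ π := ne_of_lt (harglt z hz)
  have hinvarg : Complex.arg ((F z)⁻¹) = -θ := by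
    rw [Complex.arg_inv]
    simp [hargne.symm, hθ]
    intro h; exact absurd h hargne
  have hinvne : (F z)⁻¹ ≠ 0 := inv_ne_zero hFzne
  have hargmul : Complex.arg ((z - 1) * (F z)⁻¹) =
      Complex.arg (z - 1) + Complex.arg ((F z)⁻¹) := by
    apply Complex.arg_mul hz1ne hinvne
    rw [hinvarg]
    constructor
    · have := harglt z hz
      linarith
    · linarith
  rw [hkey, hargmul, hinvarg]
  linarith
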